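/- For any sequence of real numbers a_1, ..., a_n with each a_i in (0,1], the self-normalized sum satisfies: sum_{i=1}^n a_i / (1 + sum_{j=1}^{i-1} a_j) ≤ 2 log(1 + sum_{i=1}^n a_i). -/

import Mathlib

/-- Key pointwise bound: for `x ∈ [0,1]`, `x ≤ 2 * log (1 + x)`. -/
lemma key_bound (x : ℝ) (hx0 : 0 ≤ x) (hx1 : x ≤ 1) : x ≤ 2 * Real.log (1 + x) := by
  have h1 : (0:ℝ) < 1 - x / 2 := by linarith
  have h2 : 1 - x / 2 ≤ Real.exp (-(x / 2)) := by
    have := Real.add_one_le_exp (-(x / 2)); linarith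
  have h3 : Real.exp (x / 2) ≤ 1 / (1 - x / 2) := by
    rw [show Real.exp (x/2) = (Real.exp (-(x/2)))⁻¹ by rw [← Real.exp_neg]; ring_nf]
    rw [inv_eq_one_div]
    exact one_div_le_one_div_of_le h1 h2
  have h4 : (1:ℝ) / (1 - x / 2) ≤ 1 + x := by
    rw [div_le_iff₀ h1]; nlinarith
  have h6 : x / 2 ≤ Real.log (1 + x) := by
    rw [Real.le_log_iff_exp_le (by linarith)]; exact h3.trans h4
  linarith

/-- Self-normalized sum bound: for reals `a i ∈ (0,1]`,
`∑ i, a i / (1 + ∑_{j < i} a j) ≤ 2 log (1 + ∑ i a i)`. -/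
theorem stmt_1 (n : ℕ) (a : ℕ → ℝ) (ha : ∀ i, 0 < a i ∧ a i ≤ 1) :
    ∑ i ∈ Finset.range n, a i / (1 + ∑ j ∈ Finset.range i, a j)
      ≤ 2 * Real.log (1 + ∑ i ∈ Finset.range n, a i) := by
  induction n with
  | zero => simp
  | succ n ih =>
    have hS : 0 ≤ ∑ j ∈ Finset.range n, a j :=
      Finset.sum_nonneg fun i _ => (ha i).1.le
    set S := ∑ j ∈ Finset.range n, a j with hSdef
    have hden : (0:ℝ) < 1 + S := by linarith
    have hx0 : 0 ≤ a n / (1 + S) := div_nonneg (ha n).1.le hden.le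
    have hx1 : a n / (1 + S) ≤ 1 := by
      rw [div_le_one hden]; have := (ha n).2; linarith
    have hkey := key_bound _ hx0 hx1
    have hlog : Real.log (1 + a n / (1 + S)) = Real.log (1 + S + a n) - Real.log (1 + S) := by
      rw [show 1 + a n / (1 + S) = (1 + S + a n) / (1 + S) by field_simp]
      rw [Real.log_div (by nlinarith [(ha n).1]) (by positivity)]
    rw [Finset.sum_range_succ, Finset.sum_range_succ]
    rw [hlog] at hkey
    have : 2 * Real.log (1 + (S + a n)) = 2 * Real.log (1 + S + a n) := by ring_nf
    rw [this]
    linarith
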